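/- Let G be a simple connected graph on n ≥ 4 vertices. Then q₁(G) ≥ d₁(G) + 1, where q₁(G) is the largest eigenvalue of the signless Laplacian Q(G) and d₁(G) is the maximum degree of G, with equality if and only if G is isomorphic to the star Sₙ. -/

import Mathlib

open Matrix Finset SimpleGraph

/-- The signless Laplacian matrix `Q(G) = D + A` of a simple graph, over `ℝ`. -/
def sLapMatrix {m : ℕ} (G : SimpleGraph (Fin m)) [DecidableRel G.Adj] :
    Matrix (Fin m) (Fin m) ℝ :=
  G.degMatrix ℝ + G.adjMatrix ℝ

/-- `q` lists the eigenvalues of `A` (with multiplicity) in non-increasing order. -/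
def IsEigSeq {m : ℕ} (A : Matrix (Fin m) (Fin m) ℝ) (q : Fin m → ℝ) : Prop :=
  Antitone q ∧ ∃ (hA : A.IsHermitian) (σ : Equiv.Perm (Fin m)),
    ∀ i, q i = hA.eigenvalues (σ i)

/-- `d` lists the degrees of `G` (with multiplicity) in non-increasing order. -/
def IsDegSeq {m : ℕ} (G : SimpleGraph (Fin m)) [DecidableRel G.Adj] (d : Fin m → ℕ) : Prop :=
  Antitone d ∧ ∃ σ : Equiv.Perm (Fin m), ∀ i, d i = G.degree (σ i)

lemma rayleigh_ub {m : ℕ} {A : Matrix (Fin m) (Fin m) ℝ} (hA : A.IsHermitian) {μ : ℝ}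
    (h : ∀ i, hA.eigenvalues i ≤ μ) (x : Fin m → ℝ) :
    x ⬝ᵥ (A *ᵥ x) ≤ μ * (x ⬝ᵥ x) := by
  set V : Matrix (Fin m) (Fin m) ℝ := (hA.eigenvectorUnitary : Matrix (Fin m) (Fin m) ℝ) with hV
  have hVV : V * star V = 1 := (Matrix.mem_unitaryGroup_iff).mp hA.eigenvectorUnitary.2
  have hdiag : diagonal (RCLike.ofReal ∘ hA.eigenvalues)
      = μ • (1 : Matrix (Fin m) (Fin m) ℝ) - diagonal (fun i => μ - hA.eigenvalues i) := by
    ext i j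
    rcases eq_or_ne i j with rfl | hij
    · simp [Matrix.one_apply_eq]
    · simp [diagonal_apply_ne _ hij, Matrix.one_apply_ne hij]
  have key : μ • (1 : Matrix (Fin m) (Fin m) ℝ) - A
      = V * diagonal (fun i => μ - hA.eigenvalues i) * star V := by
    conv_lhs => rw [hA.spectral_theorem]
    rw [hdiag, Unitary.conjStarAlgAut_apply, Matrix.mul_sub, Matrix.sub_mul]
    rw [Matrix.mul_smul, Matrix.smul_mul, Matrix.mul_one, hVV]
    abel
  have hpsd : PosSemidef (μ • (1 : Matrix (Fin m) (Fin m) ℝ) - A) := by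
    rw [key, Matrix.star_eq_conjTranspose]
    exact (PosSemidef.diagonal (fun i => by simpa using h i)).mul_mul_conjTranspose_same V
  have := hpsd.dotProduct_mulVec_nonneg x
  simp only [star_trivial, sub_mulVec, dotProduct_sub, smul_mulVec, one_mulVec,
    dotProduct_smul, smul_eq_mul] at this
  linarith

lemma eig_le_of_quad {m : ℕ} {A : Matrix (Fin m) (Fin m) ℝ} (hA : A.IsHermitian) {μ : ℝ}
    (h : ∀ x : Fin m → ℝ, x ⬝ᵥ (A *ᵥ x) ≤ μ * (x ⬝ᵥ x)) (i : Fin m) :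
    hA.eigenvalues i ≤ μ := by
  set u : Fin m → ℝ := ⇑(hA.eigenvectorBasis i) with hu
  have huu : u ⬝ᵥ u = 1 := by
    have hnorm : ‖hA.eigenvectorBasis i‖ = 1 := hA.eigenvectorBasis.orthonormal.1 i
    have h2 : (inner ℝ (hA.eigenvectorBasis i) (hA.eigenvectorBasis i) : ℝ) = 1 := by
      rw [real_inner_self_eq_norm_sq, hnorm]; norm_num
    simpa only [PiLp.inner_apply, RCLike.inner_apply, conj_trivial, dotProduct, mul_comm] using h2
  have hev : hA.eigenvalues i = u ⬝ᵥ (A *ᵥ u) := by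
    rw [hA.mulVec_eigenvectorBasis, dotProduct_smul, smul_eq_mul, huu, mul_one]
  calc hA.eigenvalues i = u ⬝ᵥ (A *ᵥ u) := hev
    _ ≤ μ * (u ⬝ᵥ u) := h u
    _ = μ := by rw [huu, mul_one]

lemma sLap_quad {m : ℕ} (G : SimpleGraph (Fin m)) [DecidableRel G.Adj] (x : Fin m → ℝ) :
    x ⬝ᵥ (sLapMatrix G *ᵥ x) =
      (∑ i : Fin m, ∑ j : Fin m, if G.Adj i j then (x i + x j)^2 else 0) / 2 := by
  simp_rw [sLapMatrix, add_mulVec, dotProduct_add, G.dotProduct_mulVec_degMatrix,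
    dotProduct_mulVec_adjMatrix, ← sum_add_distrib, degree_eq_sum_if_adj, sum_mul, ite_mul,
    one_mul, zero_mul, ← sum_add_distrib, ite_add_ite, add_zero]
  rw [← add_self_div_two (∑ i : Fin m, ∑ j : Fin m, _)]
  conv_lhs => enter [1,2,2,i,2,j]; rw [if_congr (adj_comm G i j) rfl rfl]
  conv_lhs => enter [1,2]; rw [Finset.sum_comm]
  simp_rw [← sum_add_distrib, ite_add_ite]
  congr 2 with i
  congr 2 with j
  ring_nf

lemma double_sum_split {m : ℕ} (v0 : Fin m) (f : Fin m → Fin m → ℝ) :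
    ∑ i : Fin m, ∑ j : Fin m, f i j = (∑ j : Fin m, f v0 j) +
      ((∑ i ∈ Finset.univ.erase v0, f i v0)
        + ∑ i ∈ Finset.univ.erase v0, ∑ j ∈ Finset.univ.erase v0, f i j) := by
  rw [← Finset.add_sum_erase _ _ (Finset.mem_univ v0)]
  congr 1
  rw [← Finset.sum_add_distrib]
  apply Finset.sum_congr rfl
  intro i _
  exact (Finset.add_sum_erase _ _ (Finset.mem_univ v0)).symm

/-- If every edge is incident to `v0`, walks ending at `v0` start at `v0` or its neighbor. -/
lemma walk_to_center {m : ℕ} {G : SimpleGraph (Fin m)} {v0 : Fin m}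
    (hkey : ∀ i j, i ≠ v0 → j ≠ v0 → G.Adj i j → ¬ G.Adj v0 j) :
    ∀ {w : Fin m}, G.Walk w v0 → w = v0 ∨ G.Adj v0 w
  | _, SimpleGraph.Walk.nil => Or.inl rfl
  | w, SimpleGraph.Walk.cons hab p' => by
      rcases walk_to_center hkey p' with rfl | hb
      · exact Or.inr hab.symm
      · by_cases ha : w = v0
        · exact Or.inl ha
        · exact absurd hb (hkey w _ ha (G.ne_of_adj hb).symm hab)
lemma star_quad_ub {m : ℕ} (hm : 1 ≤ m) (G : SimpleGraph (Fin m)) [DecidableRel G.Adj]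
    (v1 : Fin m)
    (hchar : ∀ a b, G.Adj a b ↔ (a = v1 ∧ b ≠ v1) ∨ (b = v1 ∧ a ≠ v1)) (y : Fin m → ℝ) :
    y ⬝ᵥ (sLapMatrix G *ᵥ y) ≤ m * (y ⬝ᵥ y) := by
  have hadj : ∀ j, G.Adj v1 j ↔ j ≠ v1 := by intro j; rw [hchar]; simp
  set E := Finset.univ.erase v1 with hE
  set a := y v1 with ha
  set S := ∑ j ∈ E, y j with hS
  set T := ∑ j ∈ E, (y j)^2 with hT
  rw [sLap_quad, double_sum_split v1]
  have h1 : ∑ j : Fin m, (if G.Adj v1 j then (y v1 + y j)^2 else 0)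
      = ∑ j ∈ E, (a + y j)^2 := by
    rw [← Finset.add_sum_erase _ _ (Finset.mem_univ v1), if_neg (G.irrefl (v := v1)), zero_add]
    refine Finset.sum_congr rfl fun j hj => ?_
    rw [if_pos ((hadj j).mpr (Finset.ne_of_mem_erase hj)), ← ha]
  have h2 : ∑ i ∈ E, (if G.Adj i v1 then (y i + y v1)^2 else 0) = ∑ i ∈ E, (a + y i)^2 := by
    refine Finset.sum_congr rfl fun i hi => ?_
    rw [if_pos ((G.adj_comm i v1).mpr ((hadj i).mpr (Finset.ne_of_mem_erase hi))), ← ha]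
    ring
  have h3 : ∑ i ∈ E, ∑ j ∈ E, (if G.Adj i j then (y i + y j)^2 else 0) = 0 := by
    refine Finset.sum_eq_zero fun i hi => Finset.sum_eq_zero fun j hj => ?_
    rw [if_neg]
    rw [hchar]
    push_neg
    exact ⟨fun h => absurd h (Finset.ne_of_mem_erase hi),
      fun h => absurd h (Finset.ne_of_mem_erase hj)⟩
  rw [h1, h2, h3, add_zero]
  have hyy : y ⬝ᵥ y = a^2 + T := by
    rw [dotProduct, ← Finset.add_sum_erase _ _ (Finset.mem_univ v1), ← hE]
    congr 1
    · rw [← ha]; ring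
    · exact Finset.sum_congr rfl fun j _ => (sq (y j)).symm ▸ by ring
  have hexp : ∑ j ∈ E, (a + y j)^2 = (E.card : ℝ) * a^2 + (2*a*S + T) := by
    calc ∑ j ∈ E, (a + y j)^2 = ∑ j ∈ E, (a^2 + (2*a*(y j) + (y j)^2)) :=
          Finset.sum_congr rfl (fun j _ => by ring)
    _ = ∑ j ∈ E, a^2 + (∑ j ∈ E, 2*a*(y j) + ∑ j ∈ E, (y j)^2) := by
          rw [Finset.sum_add_distrib, Finset.sum_add_distrib]
    _ = (E.card : ℝ) * a^2 + (2*a*S + T) := by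
          rw [Finset.sum_const, nsmul_eq_mul, hS, hT, ← Finset.mul_sum]
  have hcard : (E.card : ℝ) = (m : ℝ) - 1 := by
    rw [hE, Finset.card_erase_of_mem (Finset.mem_univ v1), Finset.card_univ, Fintype.card_fin]
    push_cast [Nat.cast_sub hm]
    ring
  have hCS : S^2 ≤ (E.card : ℝ) * T := by
    have := sq_sum_le_card_mul_sum_sq (s := E) (f := y)
    exact_mod_cast this
  have hT0 : (0:ℝ) ≤ T := Finset.sum_nonneg fun j _ => sq_nonneg _
  rw [hyy, hexp]
  have hm' : (1:ℝ) ≤ (m:ℝ) := by exact_mod_cast hm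
  rw [hcard] at hCS ⊢
  nlinarith [sq_nonneg (a - S)]
lemma test_vec {m : ℕ} (G : SimpleGraph (Fin m)) [DecidableRel G.Adj] (v0 : Fin m) (c : ℝ)
    (x : Fin m → ℝ) (hx : x = fun u => if u = v0 then c else if G.Adj v0 u then 1 else 0) :
    x ⬝ᵥ (sLapMatrix G *ᵥ x) = (G.degree v0 : ℝ)*(c+1)^2 +
      (∑ i ∈ Finset.univ.erase v0, ∑ j ∈ Finset.univ.erase v0,
        (if G.Adj i j then (x i + x j)^2 else 0))/2
    ∧ x ⬝ᵥ x = c^2 + (G.degree v0 : ℝ) := by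
  subst hx
  set x : Fin m → ℝ := fun u => if u = v0 then c else if G.Adj v0 u then 1 else 0 with hx
  have hxv0 : x v0 = c := by simp [hx]
  have hxj : ∀ j, j ≠ v0 → x j = if G.Adj v0 j then 1 else 0 := by
    intro j hj; simp [hx, hj]
  constructor
  · rw [sLap_quad, double_sum_split v0]
    have h1 : ∑ j : Fin m, (if G.Adj v0 j then (x v0 + x j)^2 else 0)
        = (G.degree v0 : ℝ) * (c+1)^2 := by
      have hstep : ∀ j, (if G.Adj v0 j then (x v0 + x j)^2 else 0)
          = (if G.Adj v0 j then (1:ℝ) else 0) * (c+1)^2 := by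
        intro j
        by_cases h : G.Adj v0 j
        · have hj : j ≠ v0 := (G.ne_of_adj h).symm
          rw [if_pos h, if_pos h, one_mul, hxv0, hxj j hj, if_pos h]
        · rw [if_neg h, if_neg h, zero_mul]
      simp_rw [hstep]
      rw [← Finset.sum_mul, ← degree_eq_sum_if_adj]
    have h2 : ∑ i ∈ Finset.univ.erase v0, (if G.Adj i v0 then (x i + x v0)^2 else 0)
        = (G.degree v0 : ℝ) * (c+1)^2 := by
      have hstep : ∀ i ∈ Finset.univ.erase v0, (if G.Adj i v0 then (x i + x v0)^2 else 0)
          = (if G.Adj v0 i then (1:ℝ) else 0) * (c+1)^2 := by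
        intro i hi
        have hiv : i ≠ v0 := Finset.ne_of_mem_erase hi
        by_cases h : G.Adj v0 i
        · rw [if_pos ((G.adj_comm v0 i).mp h), hxv0, hxj i hiv, if_pos h]
          ring
        · rw [if_neg (fun hc => h ((G.adj_comm i v0).mp hc)), if_neg h, zero_mul]
      rw [Finset.sum_congr rfl hstep]
      have : ∑ i ∈ Finset.univ.erase v0, (if G.Adj v0 i then (1:ℝ) else 0) * (c+1)^2
          = ∑ i : Fin m, (if G.Adj v0 i then (1:ℝ) else 0) * (c+1)^2 := by
        rw [← Finset.add_sum_erase _ _ (Finset.mem_univ v0), if_neg (G.irrefl (v := v0)),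
          zero_mul, zero_add]
      rw [this, ← Finset.sum_mul, ← degree_eq_sum_if_adj]
    rw [h1, h2]
    ring
  · rw [dotProduct, ← Finset.add_sum_erase _ _ (Finset.mem_univ v0), hxv0, ← sq]
    congr 1
    have hstep : ∀ u ∈ Finset.univ.erase v0, x u * x u = (if G.Adj v0 u then (1:ℝ) else 0) := by
      intro u hu
      rw [hxj u (Finset.ne_of_mem_erase hu)]
      split_ifs <;> norm_num
    rw [Finset.sum_congr rfl hstep]
    have : ∑ u ∈ Finset.univ.erase v0, (if G.Adj v0 u then (1:ℝ) else 0)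
        = ∑ u : Fin m, (if G.Adj v0 u then (1:ℝ) else 0) := by
      rw [← Finset.add_sum_erase _ _ (Finset.mem_univ v0), if_neg (G.irrefl (v := v0)), zero_add]
    rw [this, ← degree_eq_sum_if_adj]
lemma degree_of_char {m : ℕ} (G : SimpleGraph (Fin m)) [DecidableRel G.Adj] (v0 : Fin m)
    (hchar : ∀ a b, G.Adj a b ↔ (a = v0 ∧ b ≠ v0) ∨ (b = v0 ∧ a ≠ v0)) :
    G.degree v0 = m - 1 := by
  rw [← card_neighborFinset_eq_degree]
  have : G.neighborFinset v0 = Finset.univ.erase v0 := by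
    ext w
    simp [mem_neighborFinset, hchar, eq_comm]
  rw [this, Finset.card_erase_of_mem (mem_univ v0), Finset.card_univ, Fintype.card_fin]

lemma iso_of_char {m : ℕ} (hm : 0 < m) (G : SimpleGraph (Fin m)) [DecidableRel G.Adj] (v0 : Fin m)
    (hchar : ∀ a b, G.Adj a b ↔ (a = v0 ∧ b ≠ v0) ∨ (b = v0 ∧ a ≠ v0)) :
    Nonempty (G ≃g completeBipartiteGraph (Fin 1) (Fin (m - 1))) := by
  let z : Fin m := ⟨0, hm⟩
  let e : Fin m ≃ (Fin 1 ⊕ Fin (m - 1)) :=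
    (Equiv.swap v0 z).trans ((finCongr (by omega : m = 1 + (m - 1))).trans finSumFinEquiv.symm)
  have hsymm : e.symm (Sum.inl 0) = v0 := by
    simp only [e, Equiv.symm_trans_apply, Equiv.symm_symm, finSumFinEquiv_apply_left]
    have : (finCongr (by omega : m = 1 + (m - 1))).symm (Fin.castAdd (m-1) 0) = z := by
      simp [Fin.ext_iff, z]
    rw [this, Equiv.symm_apply_eq]
    exact (Equiv.swap_apply_left v0 z).symm
  have he : ∀ a, e a = Sum.inl 0 ↔ a = v0 := by
    intro a
    rw [← hsymm, ← Equiv.eq_symm_apply]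
  have hleft : ∀ s : Fin 1 ⊕ Fin (m - 1), s.isLeft = true ↔ s = Sum.inl 0 := by
    rintro (a | a)
    · simp [Fin.fin_one_eq_zero a]
    · simp
  have hright : ∀ s : Fin 1 ⊕ Fin (m - 1), s.isRight = true ↔ ¬ s = Sum.inl 0 := by
    rintro (a | a)
    · simp [Fin.fin_one_eq_zero a]
    · simp
  refine ⟨⟨e, ?_⟩⟩
  intro a b
  show (e a).isLeft ∧ (e b).isRight ∨ (e a).isRight ∧ (e b).isLeft ↔ G.Adj a b
  rw [hchar a b]
  constructor
  · rintro (⟨h1, h2⟩ | ⟨h1, h2⟩)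
    · exact Or.inl ⟨(he a).mp ((hleft _).mp h1),
        fun hb => ((hright _).mp h2) ((he b).mpr hb)⟩
    · exact Or.inr ⟨(he b).mp ((hleft _).mp h2),
        fun ha => ((hright _).mp h1) ((he a).mpr ha)⟩
  · rintro (⟨h1, h2⟩ | ⟨h1, h2⟩)
    · exact Or.inl ⟨(hleft _).mpr ((he a).mpr h1),
        (hright _).mpr (fun hb => h2 ((he b).mp hb))⟩
    · exact Or.inr ⟨(hright _).mpr (fun ha => h2 ((he a).mp ha)),
        (hleft _).mpr ((he b).mpr h1)⟩

lemma char_of_iso {m : ℕ} (G : SimpleGraph (Fin m)) [DecidableRel G.Adj]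
    (f : G ≃g completeBipartiteGraph (Fin 1) (Fin (m - 1))) (a b : Fin m) :
    G.Adj a b ↔ (a = f.symm (Sum.inl 0) ∧ b ≠ f.symm (Sum.inl 0)) ∨
      (b = f.symm (Sum.inl 0) ∧ a ≠ f.symm (Sum.inl 0)) := by
  set v0 := f.symm (Sum.inl 0) with hv0
  have he : ∀ c : Fin m, f c = Sum.inl 0 ↔ c = v0 := by
    intro c
    rw [hv0]
    exact (f.toEquiv.eq_symm_apply).symm
  have hleft : ∀ s : Fin 1 ⊕ Fin (m - 1), s.isLeft = true ↔ s = Sum.inl 0 := by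
    rintro (x | x)
    · simp [Fin.fin_one_eq_zero x]
    · simp
  have hright : ∀ s : Fin 1 ⊕ Fin (m - 1), s.isRight = true ↔ ¬ s = Sum.inl 0 := by
    rintro (x | x)
    · simp [Fin.fin_one_eq_zero x]
    · simp
  rw [← f.map_rel_iff]
  show (f a).isLeft ∧ (f b).isRight ∨ (f a).isRight ∧ (f b).isLeft ↔ _
  simp only [hleft, hright, he]
  tauto

lemma walk_head_adj {V : Type*} {G : SimpleGraph V} :
    ∀ {u w : V}, G.Walk u w → u ≠ w → ∃ y, G.Adj u y
  | _, _, SimpleGraph.Walk.nil, h => absurd rfl h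
  | _, _, SimpleGraph.Walk.cons hadj _, _ => ⟨_, hadj⟩

theorem q_one_ge_d_one_add_one {n : ℕ} (hn : 4 ≤ n)
    (G : SimpleGraph (Fin n)) [DecidableRel G.Adj] (hG : G.Connected)
    (q : Fin n → ℝ) (hq : IsEigSeq (sLapMatrix G) q)
    (d : Fin n → ℕ) (hd : IsDegSeq G d) :
    q ⟨0, by omega⟩ ≥ (d ⟨0, by omega⟩ : ℝ) + 1 ∧
    (q ⟨0, by omega⟩ = (d ⟨0, by omega⟩ : ℝ) + 1 ↔
      Nonempty (G ≃g completeBipartiteGraph (Fin 1) (Fin (n - 1)))) := by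
  obtain ⟨hqa, hA, σ, hqeq⟩ := hq
  obtain ⟨hda, τ, hdeq⟩ := hd
  set z : Fin n := ⟨0, by omega⟩ with hz
  have hq0 : ∀ i, hA.eigenvalues i ≤ q z := by
    intro i
    have h1 : q (σ.symm i) = hA.eigenvalues i := by rw [hqeq, Equiv.apply_symm_apply]
    rw [← h1]
    exact hqa (by simp [hz, Fin.le_def])
  have hdmax : ∀ v, G.degree v ≤ d z := by
    intro v
    have h1 : d (τ.symm v) = G.degree v := by rw [hdeq, Equiv.apply_symm_apply]
    rw [← h1]
    exact hda (by simp [hz, Fin.le_def])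
  set v0 : Fin n := τ z with hv0
  have hdz : d z = G.degree v0 := hdeq z
  have hΔ1 : 1 ≤ d z := by
    have hw : τ ⟨1, by omega⟩ ≠ v0 := by
      simp only [hv0, ne_eq, EmbeddingLike.apply_eq_iff_eq]
      simp [hz, Fin.ext_iff]
    obtain ⟨p⟩ := hG.preconnected v0 (τ ⟨1, by omega⟩)
    obtain ⟨y, hy⟩ := walk_head_adj p (Ne.symm hw)
    have := (G.degree_pos_iff_exists_adj v0).mpr ⟨_, hy⟩
    omega
  set Δ : ℝ := (d z : ℝ) with hΔ
  have hΔ1' : (1:ℝ) ≤ Δ := by rw [hΔ]; exact_mod_cast hΔ1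
  have hΔdeg : (G.degree v0 : ℝ) = Δ := by rw [hΔ, hdz]
  set x : Fin n → ℝ := fun u => if u = v0 then Δ else if G.Adj v0 u then 1 else 0 with hx
  obtain ⟨hQx, hxx⟩ := test_vec G v0 Δ x hx
  rw [hΔdeg] at hQx hxx
  set T : ℝ := ∑ i ∈ Finset.univ.erase v0, ∑ j ∈ Finset.univ.erase v0,
      (if G.Adj i j then (x i + x j)^2 else 0) with hT
  have hT0 : 0 ≤ T :=
    Finset.sum_nonneg fun i _ => Finset.sum_nonneg fun j _ => by positivity
  have hray := rayleigh_ub hA hq0 x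
  rw [hQx, hxx] at hray
  have hlower : q z ≥ Δ + 1 := by nlinarith
  refine ⟨hlower, ?_, ?_⟩
  · -- equality → star
    intro hEq
    have hEq' : q z = Δ + 1 := hEq
    rw [hEq'] at hray
    have hTz : T = 0 := by nlinarith
    have hkey : ∀ i j, i ≠ v0 → j ≠ v0 → G.Adj i j → ¬ G.Adj v0 j := by
      intro i j hi hj hadj hvj
      have hmem : ∀ k, k ≠ v0 → k ∈ Finset.univ.erase v0 := fun k hk =>
        Finset.mem_erase.mpr ⟨hk, Finset.mem_univ k⟩
      have h1 := (Finset.sum_eq_zero_iff_of_nonneg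
        (fun i _ => Finset.sum_nonneg fun j _ => by positivity)).mp hTz.symm.symm i (hmem i hi)
      have h2 := (Finset.sum_eq_zero_iff_of_nonneg
        (fun j _ => by positivity)).mp h1 j (hmem j hj)
      rw [if_pos hadj] at h2
      have hxi : 0 ≤ x i := by rw [hx]; dsimp only; split_ifs <;> norm_num [hΔ]
      have hxj1 : x j = 1 := by rw [hx]; simp [hj, hvj]
      rw [hxj1] at h2
      nlinarith
    have hall : ∀ w, w ≠ v0 → G.Adj v0 w := by
      intro w hw
      obtain ⟨p⟩ := hG.preconnected w v0
      exact (walk_to_center hkey p).resolve_left hw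
    have hchar : ∀ a b, G.Adj a b ↔ (a = v0 ∧ b ≠ v0) ∨ (b = v0 ∧ a ≠ v0) := by
      intro a b
      constructor
      · intro hadj
        by_cases ha : a = v0
        · subst ha; exact Or.inl ⟨rfl, (G.ne_of_adj hadj).symm⟩
        · by_cases hb : b = v0
          · subst hb; exact Or.inr ⟨rfl, ha⟩
          · exact absurd (hall b hb) (hkey a b ha hb hadj)
      · rintro (⟨rfl, hb⟩ | ⟨rfl, ha⟩)
        · exact hall b hb
        · exact (hall a ha).symm
    exact iso_of_char (by omega) G v0 hchar
  · -- star → equality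
    rintro ⟨f⟩
    have hchar := char_of_iso G f
    set v1 : Fin n := f.symm (Sum.inl 0) with hv1
    have hdeg1 : G.degree v1 = n - 1 := degree_of_char G v1 hchar
    have hdzn : d z = n - 1 := by
      have h1 : G.degree v0 < n := by
        have := G.degree_lt_card_verts v0
        rwa [Fintype.card_fin] at this
      have h2 := hdmax v1
      omega
    have hub := star_quad_ub (by omega : 1 ≤ n) G v1 hchar
    have hqub : q z ≤ n := by
      have := eig_le_of_quad hA hub (σ z)
      rw [← hqeq z] at this
      exact this
    have hcast : Δ + 1 = (n : ℝ) := by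
      rw [hΔ, hdzn]
      have : (1:ℕ) ≤ n := by omega
      push_cast [Nat.cast_sub this]
      ring
    show q z = Δ + 1
    rw [hcast]
    linarith [hlower, hcast ▸ hlower]
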